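/- (Preservation) If ⊢ c : C is derivable for a closed core Eff computation c and c ⇝ c', then ⊢ c' : C is derivable. -/

import Mathlib

namespace CoreEff

/-- Names for effects, instances and operation symbols. -/
structure Sig where
  Effect : Type
  Inst : Type
  Op : Type

/- Pure types and dirty types of core Eff.  A region is a finite set of
instances, a dirt a finite set of operations `ι#op`. -/
mutual
inductive PType (σ : Sig) : Type
  | bool : PType σ
  | nat : PType σ
  | unit : PType σ
  | empty : PType σ
  | fn : PType σ → DType σ → PType σ
  | eff : σ.Effect → Finset σ.Inst → PType σ
  | hand : DType σ → DType σ → PType σ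
inductive DType (σ : Sig) : Type
  | bang : PType σ → Finset (σ.Inst × σ.Op) → DType σ
end

/-- Assignment of effects to instances and operation symbols, and of
parameter/result types to operation symbols (the signatures `Σ_E`). -/
structure OpSig (σ : Sig) where
  instOf : σ.Inst → σ.Effect
  opOf : σ.Op → σ.Effect
  par : σ.Op → PType σ
  res : σ.Op → PType σ

/- Syntax of core Eff, with de Bruijn indices.
In an operation case `e#op x k ↦ c`, the body `c` binds `x` as index 1 and
`k` as index 0.  In `letrec f x = c₁ in c₂`, `c₁` binds `f` as 1 and `x` as 0,
and `c₂` binds `f` as 0. -/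
mutual
inductive Expr (σ : Sig) : Type
  | var : Nat → Expr σ
  | tt : Expr σ
  | ff : Expr σ
  | zero : Expr σ
  | succ : Expr σ → Expr σ
  | unit : Expr σ
  | fn : PType σ → Comp σ → Expr σ
  | inst : σ.Inst → Expr σ
  | handler : PType σ → Comp σ → OpCases σ → Expr σ
inductive OpCases (σ : Sig) : Type
  | nil : DType σ → OpCases σ
  | cons : Expr σ → σ.Op → Comp σ → OpCases σ → OpCases σ
inductive Comp (σ : Sig) : Type
  | ret : Expr σ → Comp σ
  | call : Expr σ → σ.Op → Expr σ → Comp σ → Comp σ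
  | handle : Expr σ → Comp σ → Comp σ
  | ite : Expr σ → Comp σ → Comp σ → Comp σ
  | case : Expr σ → Comp σ → Comp σ → Comp σ
  | absurd : DType σ → Expr σ → Comp σ
  | app : Expr σ → Expr σ → Comp σ
  | letin : Comp σ → Comp σ → Comp σ
  | letrec : PType σ → DType σ → Comp σ → Comp σ → Comp σ
end

/-- Pushing a renaming under one binder. -/
def liftRen (ξ : Nat → Nat) : Nat → Nat
  | 0 => 0
  | n + 1 => ξ n + 1

variable {σ : Sig}

mutual
def renameE (ξ : Nat → Nat) : Expr σ → Expr σ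
  | .var n => .var (ξ n)
  | .tt => .tt
  | .ff => .ff
  | .zero => .zero
  | .succ e => .succ (renameE ξ e)
  | .unit => .unit
  | .fn A c => .fn A (renameC (liftRen ξ) c)
  | .inst ι => .inst ι
  | .handler A cv ocs => .handler A (renameC (liftRen ξ) cv) (renameO ξ ocs)
def renameO (ξ : Nat → Nat) : OpCases σ → OpCases σ
  | .nil C => .nil C
  | .cons e op c ocs =>
      .cons (renameE ξ e) op (renameC (liftRen (liftRen ξ)) c) (renameO ξ ocs)
def renameC (ξ : Nat → Nat) : Comp σ → Comp σ
  | .ret e => .ret (renameE ξ e)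
  | .call e1 op e2 c => .call (renameE ξ e1) op (renameE ξ e2) (renameC (liftRen ξ) c)
  | .handle e c => .handle (renameE ξ e) (renameC ξ c)
  | .ite e c1 c2 => .ite (renameE ξ e) (renameC ξ c1) (renameC ξ c2)
  | .case e c1 c2 => .case (renameE ξ e) (renameC ξ c1) (renameC (liftRen ξ) c2)
  | .absurd C e => .absurd C (renameE ξ e)
  | .app e1 e2 => .app (renameE ξ e1) (renameE ξ e2)
  | .letin c1 c2 => .letin (renameC ξ c1) (renameC (liftRen ξ) c2)
  | .letrec A C c1 c2 =>
      .letrec A C (renameC (liftRen (liftRen ξ)) c1) (renameC (liftRen ξ) c2)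
end

/-- Weakening of an expression by one variable. -/
def shiftE (e : Expr σ) : Expr σ := renameE Nat.succ e

/-- Pushing a substitution under one binder. -/
def liftSub (s : Nat → Expr σ) : Nat → Expr σ
  | 0 => .var 0
  | n + 1 => shiftE (s n)

mutual
def substE (s : Nat → Expr σ) : Expr σ → Expr σ
  | .var n => s n
  | .tt => .tt
  | .ff => .ff
  | .zero => .zero
  | .succ e => .succ (substE s e)
  | .unit => .unit
  | .fn A c => .fn A (substC (liftSub s) c)
  | .inst ι => .inst ι
  | .handler A cv ocs => .handler A (substC (liftSub s) cv) (substO s ocs)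
def substO (s : Nat → Expr σ) : OpCases σ → OpCases σ
  | .nil C => .nil C
  | .cons e op c ocs =>
      .cons (substE s e) op (substC (liftSub (liftSub s)) c) (substO s ocs)
def substC (s : Nat → Expr σ) : Comp σ → Comp σ
  | .ret e => .ret (substE s e)
  | .call e1 op e2 c => .call (substE s e1) op (substE s e2) (substC (liftSub s) c)
  | .handle e c => .handle (substE s e) (substC s c)
  | .ite e c1 c2 => .ite (substE s e) (substC s c1) (substC s c2)
  | .case e c1 c2 => .case (substE s e) (substC s c1) (substC (liftSub s) c2)
  | .absurd C e => .absurd C (substE s e)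
  | .app e1 e2 => .app (substE s e1) (substE s e2)
  | .letin c1 c2 => .letin (substC s c1) (substC (liftSub s) c2)
  | .letrec A C c1 c2 =>
      .letrec A C (substC (liftSub (liftSub s)) c1) (substC (liftSub s) c2)
end

/-- Substituting an expression for the last-bound variable. -/
def sub1 (e : Expr σ) : Nat → Expr σ
  | 0 => e
  | n + 1 => .var n

/-- Substituting for the two last-bound variables (index 1 gets `e1`, index 0 gets `e0`). -/
def sub2 (e1 e0 : Expr σ) : Nat → Expr σ
  | 0 => e0
  | 1 => e1
  | n + 2 => .var n

def subst0E (e : Expr σ) (e' : Expr σ) : Expr σ := substE (sub1 e) e'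
def subst0C (e : Expr σ) (c : Comp σ) : Comp σ := substC (sub1 e) c
def subst2C (e1 e0 : Expr σ) (c : Comp σ) : Comp σ := substC (sub2 e1 e0) c

/-- Swap of the two last-bound variables. -/
def swap01 : Nat → Nat
  | 0 => 1
  | 1 => 0
  | n + 2 => n + 2

/-- The unfolding `fun x ↦ let rec f x = c₁ in c₁` of a recursive definition. -/
def recUnfold (A : PType σ) (C : DType σ) (c1 : Comp σ) : Expr σ :=
  .fn A (.letrec A C (renameC (liftRen (liftRen Nat.succ)) c1) (renameC swap01 c1))

/-- `Dispatch ocs ι op e κ c` means `c = ocs_{ι#op}(e, κ)`: the first operation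
case of `ocs` matching `ι#op` is selected (substituting `e` for the parameter
and `κ` for the continuation) and the call is re-raised, with continuation
`(y. κ y)`, if no case matches. -/
inductive Dispatch : OpCases σ → σ.Inst → σ.Op → Expr σ → Expr σ → Comp σ → Prop
  | nil {C ι op e κ} :
      Dispatch (.nil C) ι op e κ (.call (.inst ι) op e (.app (shiftE κ) (.var 0)))
  | found {ι op c ocs e κ} :
      Dispatch (.cons (.inst ι) op c ocs) ι op e κ (subst2C e κ c)
  | skip {e' op' c ocs ι op e κ c'} :
      (Expr.inst ι ≠ e' ∨ op ≠ op') →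
      Dispatch ocs ι op e κ c' →
      Dispatch (.cons e' op' c ocs) ι op e κ c'

/-- Small-step operational semantics `c ⇝ c'` of core Eff. -/
inductive Step (Ω : OpSig σ) : Comp σ → Comp σ → Prop
  | iteTrue {c1 c2} : Step Ω (.ite .tt c1 c2) c1
  | iteFalse {c1 c2} : Step Ω (.ite .ff c1 c2) c2
  | caseZero {c1 c2} : Step Ω (.case .zero c1 c2) c1
  | caseSucc {e c1 c2} : Step Ω (.case (.succ e) c1 c2) (subst0C e c2)
  | app {A c e} : Step Ω (.app (.fn A c) e) (subst0C e c)
  | letCong {c1 c1' c2} : Step Ω c1 c1' → Step Ω (.letin c1 c2) (.letin c1' c2)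
  | letVal {e c2} : Step Ω (.letin (.ret e) c2) (subst0C e c2)
  | letOp {ι op e c1 c2} :
      Step Ω (.letin (.call (.inst ι) op e c1) c2)
        (.call (.inst ι) op e (.letin c1 (renameC (liftRen Nat.succ) c2)))
  | letrec {A C c1 c2} : Step Ω (.letrec A C c1 c2) (subst0C (recUnfold A C c1) c2)
  | handleCong {h c c'} : Step Ω c c' → Step Ω (.handle h c) (.handle h c')
  | handleVal {A cv ocs e} :
      Step Ω (.handle (.handler A cv ocs) (.ret e)) (subst0C e cv)
  | handleOp {A cv ocs ι op e c c'} :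
      Dispatch ocs ι op e
        (.fn (Ω.res op) (.handle (shiftE (.handler A cv ocs)) c)) c' →
      Step Ω (.handle (.handler A cv ocs) (.call (.inst ι) op e c)) c'

/-- Big-step operational semantics `c ⇓ r` of core Eff; results are `val e`
and operation calls `ι#op e (y.c)`. -/
inductive Big (Ω : OpSig σ) : Comp σ → Comp σ → Prop
  | ret {e} : Big Ω (.ret e) (.ret e)
  | call {ι op e c} : Big Ω (.call (.inst ι) op e c) (.call (.inst ι) op e c)
  | iteTrue {c1 c2 r} : Big Ω c1 r → Big Ω (.ite .tt c1 c2) r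
  | iteFalse {c1 c2 r} : Big Ω c2 r → Big Ω (.ite .ff c1 c2) r
  | caseZero {c1 c2 r} : Big Ω c1 r → Big Ω (.case .zero c1 c2) r
  | caseSucc {e c1 c2 r} : Big Ω (subst0C e c2) r → Big Ω (.case (.succ e) c1 c2) r
  | app {A c e r} : Big Ω (subst0C e c) r → Big Ω (.app (.fn A c) e) r
  | letVal {c1 c2 e r} : Big Ω c1 (.ret e) → Big Ω (subst0C e c2) r →
      Big Ω (.letin c1 c2) r
  | letOp {c1 c2 ι op e c} : Big Ω c1 (.call (.inst ι) op e c) →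
      Big Ω (.letin c1 c2)
        (.call (.inst ι) op e (.letin c (renameC (liftRen Nat.succ) c2)))
  | letrec {A C c1 c2 r} : Big Ω (subst0C (recUnfold A C c1) c2) r →
      Big Ω (.letrec A C c1 c2) r
  | handleVal {A cv ocs c e r} : Big Ω c (.ret e) → Big Ω (subst0C e cv) r →
      Big Ω (.handle (.handler A cv ocs) c) r
  | handleOp {A cv ocs c ι op e c' c'' r} :
      Big Ω c (.call (.inst ι) op e c') →
      Dispatch ocs ι op e
        (.fn (Ω.res op) (.handle (shiftE (.handler A cv ocs)) c')) c'' →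
      Big Ω c'' r →
      Big Ω (.handle (.handler A cv ocs) c) r

/-- `c ⇝* r`: iterated small steps ending in a result. -/
inductive StarStep (Ω : OpSig σ) : Comp σ → Comp σ → Prop
  | ret {e} : StarStep Ω (.ret e) (.ret e)
  | call {ι op e c} : StarStep Ω (.call (.inst ι) op e c) (.call (.inst ι) op e c)
  | step {c c' r} : Step Ω c c' → StarStep Ω c' r → StarStep Ω c r

/- Structural subtyping of pure and dirty types. -/
mutual
inductive SubP (σ : Sig) : PType σ → PType σ → Prop
  | bool : SubP σ .bool .bool
  | nat : SubP σ .nat .nat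
  | unit : SubP σ .unit .unit
  | empty : SubP σ .empty .empty
  | fn {A A' C C'} : SubP σ A' A → SubD σ C C' → SubP σ (.fn A C) (.fn A' C')
  | eff {E R R'} : R ⊆ R' → SubP σ (.eff E R) (.eff E R')
  | hand {C C' D D'} : SubD σ C' C → SubD σ D D' → SubP σ (.hand C D) (.hand C' D')
inductive SubD (σ : Sig) : DType σ → DType σ → Prop
  | bang {A A' Δ Δ'} : SubP σ A A' → Δ ⊆ Δ' → SubD σ (.bang A Δ) (.bang A' Δ')
end

/- The effect system of core Eff: typing of expressions, operation cases
(`Γ ⊢ ocs : C / Δ`) and computations, with subsumption. -/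
mutual
inductive HasTypeE (σ : Sig) (Ω : OpSig σ) [DecidableEq σ.Inst] [DecidableEq σ.Op] :
    List (PType σ) → Expr σ → PType σ → Prop
  | var {Γ n A} : Γ[n]? = some A → HasTypeE σ Ω Γ (.var n) A
  | tt {Γ} : HasTypeE σ Ω Γ .tt .bool
  | ff {Γ} : HasTypeE σ Ω Γ .ff .bool
  | zero {Γ} : HasTypeE σ Ω Γ .zero .nat
  | succ {Γ e} : HasTypeE σ Ω Γ e .nat → HasTypeE σ Ω Γ (.succ e) .nat
  | unit {Γ} : HasTypeE σ Ω Γ .unit .unit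
  | fn {Γ A c C} : HasTypeC σ Ω (A :: Γ) c C → HasTypeE σ Ω Γ (.fn A c) (.fn A C)
  | inst {Γ ι E R} : ι ∈ R → (∀ κ ∈ R, Ω.instOf κ = E) →
      HasTypeE σ Ω Γ (.inst ι) (.eff E R)
  | handler {Γ A cv ocs B Δ Δ' Δ''} :
      HasTypeC σ Ω (A :: Γ) cv (.bang B Δ') →
      HasTypeO σ Ω Γ ocs (.bang B Δ') Δ'' →
      Δ ⊆ Δ'' ∪ Δ' →
      HasTypeE σ Ω Γ (.handler A cv ocs) (.hand (.bang A Δ) (.bang B Δ'))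
  | sub {Γ e A A'} : HasTypeE σ Ω Γ e A → SubP σ A A' → HasTypeE σ Ω Γ e A'
inductive HasTypeO (σ : Sig) (Ω : OpSig σ) [DecidableEq σ.Inst] [DecidableEq σ.Op] :
    List (PType σ) → OpCases σ → DType σ → Finset (σ.Inst × σ.Op) → Prop
  | nil {Γ C} : HasTypeO σ Ω Γ (.nil C) C ∅
  | cons {Γ e op c ocs E R C Δ Δ'} :
      HasTypeE σ Ω Γ e (.eff E R) →
      Ω.opOf op = E →
      HasTypeC σ Ω (.fn (Ω.res op) C :: Ω.par op :: Γ) c C →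
      HasTypeO σ Ω Γ ocs C Δ' →
      (∀ ι, R = {ι} → Δ ⊆ insert (ι, op) Δ') →
      ((¬ ∃ ι, R = {ι}) → Δ ⊆ Δ') →
      HasTypeO σ Ω Γ (.cons e op c ocs) C Δ
inductive HasTypeC (σ : Sig) (Ω : OpSig σ) [DecidableEq σ.Inst] [DecidableEq σ.Op] :
    List (PType σ) → Comp σ → DType σ → Prop
  | ret {Γ e A Δ} : HasTypeE σ Ω Γ e A → HasTypeC σ Ω Γ (.ret e) (.bang A Δ)
  | call {Γ e1 op e2 c E R A Δ} :
      HasTypeE σ Ω Γ e1 (.eff E R) →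
      Ω.opOf op = E →
      HasTypeE σ Ω Γ e2 (Ω.par op) →
      HasTypeC σ Ω (Ω.res op :: Γ) c (.bang A Δ) →
      (∀ ι ∈ R, (ι, op) ∈ Δ) →
      HasTypeC σ Ω Γ (.call e1 op e2 c) (.bang A Δ)
  | handle {Γ e c C D} : HasTypeE σ Ω Γ e (.hand C D) → HasTypeC σ Ω Γ c C →
      HasTypeC σ Ω Γ (.handle e c) D
  | ite {Γ e c1 c2 C} : HasTypeE σ Ω Γ e .bool → HasTypeC σ Ω Γ c1 C →
      HasTypeC σ Ω Γ c2 C → HasTypeC σ Ω Γ (.ite e c1 c2) C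
  | case {Γ e c1 c2 C} : HasTypeE σ Ω Γ e .nat → HasTypeC σ Ω Γ c1 C →
      HasTypeC σ Ω (.nat :: Γ) c2 C → HasTypeC σ Ω Γ (.case e c1 c2) C
  | absurd {Γ e C} : HasTypeE σ Ω Γ e .empty → HasTypeC σ Ω Γ (.absurd C e) C
  | app {Γ e1 e2 A C} : HasTypeE σ Ω Γ e1 (.fn A C) → HasTypeE σ Ω Γ e2 A →
      HasTypeC σ Ω Γ (.app e1 e2) C
  | letin {Γ c1 c2 A B Δ} : HasTypeC σ Ω Γ c1 (.bang A Δ) →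
      HasTypeC σ Ω (A :: Γ) c2 (.bang B Δ) →
      HasTypeC σ Ω Γ (.letin c1 c2) (.bang B Δ)
  | letrec {Γ A C c1 c2 D} :
      HasTypeC σ Ω (A :: .fn A C :: Γ) c1 C →
      HasTypeC σ Ω (.fn A C :: Γ) c2 D →
      HasTypeC σ Ω Γ (.letrec A C c1 c2) D
  | sub {Γ c C C'} : HasTypeC σ Ω Γ c C → SubD σ C C' → HasTypeC σ Ω Γ c C'
end

/-- Skeletal types: pure/dirty types with all effect information erased. -/
inductive SType (σ : Sig) : Type
  | bool : SType σ
  | nat : SType σ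
  | unit : SType σ
  | empty : SType σ
  | fn : SType σ → SType σ → SType σ
  | eff : σ.Effect → SType σ
  | hand : SType σ → SType σ → SType σ

/- Skeletal erasure of pure and dirty types. -/
mutual
def skelP : PType σ → SType σ
  | .bool => .bool
  | .nat => .nat
  | .unit => .unit
  | .empty => .empty
  | .fn A C => .fn (skelP A) (skelD C)
  | .eff E _ => .eff E
  | .hand C D => .hand (skelD C) (skelD D)
def skelD : DType σ → SType σ
  | .bang A _ => skelP A
end

/- The skeletal type system: the rules of core Eff with all effect
information erased and without subsumption. -/
mutual
inductive SHasTypeE (σ : Sig) (Ω : OpSig σ) :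
    List (SType σ) → Expr σ → SType σ → Prop
  | var {Γ n S} : Γ[n]? = some S → SHasTypeE σ Ω Γ (.var n) S
  | tt {Γ} : SHasTypeE σ Ω Γ .tt .bool
  | ff {Γ} : SHasTypeE σ Ω Γ .ff .bool
  | zero {Γ} : SHasTypeE σ Ω Γ .zero .nat
  | succ {Γ e} : SHasTypeE σ Ω Γ e .nat → SHasTypeE σ Ω Γ (.succ e) .nat
  | unit {Γ} : SHasTypeE σ Ω Γ .unit .unit
  | fn {Γ A c T} : SHasTypeC σ Ω (skelP A :: Γ) c T →
      SHasTypeE σ Ω Γ (.fn A c) (.fn (skelP A) T)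
  | inst {Γ ι} : SHasTypeE σ Ω Γ (.inst ι) (.eff (Ω.instOf ι))
  | handler {Γ A cv ocs T} :
      SHasTypeC σ Ω (skelP A :: Γ) cv T →
      SHasTypeO σ Ω Γ ocs T →
      SHasTypeE σ Ω Γ (.handler A cv ocs) (.hand (skelP A) T)
inductive SHasTypeO (σ : Sig) (Ω : OpSig σ) :
    List (SType σ) → OpCases σ → SType σ → Prop
  | nil {Γ C} : SHasTypeO σ Ω Γ (.nil C) (skelD C)
  | cons {Γ e op c ocs T} :
      SHasTypeE σ Ω Γ e (.eff (Ω.opOf op)) →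
      SHasTypeC σ Ω (.fn (skelP (Ω.res op)) T :: skelP (Ω.par op) :: Γ) c T →
      SHasTypeO σ Ω Γ ocs T →
      SHasTypeO σ Ω Γ (.cons e op c ocs) T
inductive SHasTypeC (σ : Sig) (Ω : OpSig σ) :
    List (SType σ) → Comp σ → SType σ → Prop
  | ret {Γ e S} : SHasTypeE σ Ω Γ e S → SHasTypeC σ Ω Γ (.ret e) S
  | call {Γ e1 op e2 c T} :
      SHasTypeE σ Ω Γ e1 (.eff (Ω.opOf op)) →
      SHasTypeE σ Ω Γ e2 (skelP (Ω.par op)) →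
      SHasTypeC σ Ω (skelP (Ω.res op) :: Γ) c T →
      SHasTypeC σ Ω Γ (.call e1 op e2 c) T
  | handle {Γ e c S T} : SHasTypeE σ Ω Γ e (.hand S T) → SHasTypeC σ Ω Γ c S →
      SHasTypeC σ Ω Γ (.handle e c) T
  | ite {Γ e c1 c2 T} : SHasTypeE σ Ω Γ e .bool → SHasTypeC σ Ω Γ c1 T →
      SHasTypeC σ Ω Γ c2 T → SHasTypeC σ Ω Γ (.ite e c1 c2) T
  | case {Γ e c1 c2 T} : SHasTypeE σ Ω Γ e .nat → SHasTypeC σ Ω Γ c1 T →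
      SHasTypeC σ Ω (.nat :: Γ) c2 T → SHasTypeC σ Ω Γ (.case e c1 c2) T
  | absurd {Γ e C} : SHasTypeE σ Ω Γ e .empty → SHasTypeC σ Ω Γ (.absurd C e) (skelD C)
  | app {Γ e1 e2 S T} : SHasTypeE σ Ω Γ e1 (.fn S T) → SHasTypeE σ Ω Γ e2 S →
      SHasTypeC σ Ω Γ (.app e1 e2) T
  | letin {Γ c1 c2 S T} : SHasTypeC σ Ω Γ c1 S → SHasTypeC σ Ω (S :: Γ) c2 T →
      SHasTypeC σ Ω Γ (.letin c1 c2) T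
  | letrec {Γ A C c1 c2 T} :
      SHasTypeC σ Ω (skelP A :: .fn (skelP A) (skelD C) :: Γ) c1 (skelD C) →
      SHasTypeC σ Ω (.fn (skelP A) (skelD C) :: Γ) c2 T →
      SHasTypeC σ Ω Γ (.letrec A C c1 c2) T
end

end CoreEff

namespace CoreEff

set_option linter.unusedSectionVars false

variable {σ : Sig}

mutual
def SubP.rfl : (A : PType σ) → SubP σ A A
  | .bool => .bool
  | .nat => .nat
  | .unit => .unit
  | .empty => .empty
  | .fn A C => .fn (SubP.rfl A) (SubD.rfl C)
  | .eff _ R => .eff (Finset.Subset.refl R)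
  | .hand C D => .hand (SubD.rfl C) (SubD.rfl D)
def SubD.rfl : (C : DType σ) → SubD σ C C
  | .bang A Δ => .bang (SubP.rfl A) (Finset.Subset.refl Δ)
end

theorem SubD.trans_aux {C1 C2 : DType σ} (h : SubD σ C1 C2) :
    (∀ C3, SubD σ C2 C3 → SubD σ C1 C3) ∧ (∀ C0, SubD σ C0 C1 → SubD σ C0 C2) := by
  induction h using SubD.rec
    (motive_1 := fun A1 A2 _ =>
      (∀ A3, SubP σ A2 A3 → SubP σ A1 A3) ∧ (∀ A0, SubP σ A0 A1 → SubP σ A0 A2)) with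
  | bool => exact ⟨fun _ h => h, fun _ h => h⟩
  | nat => exact ⟨fun _ h => h, fun _ h => h⟩
  | unit => exact ⟨fun _ h => h, fun _ h => h⟩
  | empty => exact ⟨fun _ h => h, fun _ h => h⟩
  | fn hA hC ihA ihC =>
      constructor
      · intro A3 h3; cases h3 with
        | fn hA' hC' => exact .fn (ihA.2 _ hA') (ihC.1 _ hC')
      · intro A0 h0; cases h0 with
        | fn hA' hC' => exact .fn (ihA.1 _ hA') (ihC.2 _ hC')
  | eff hR =>
      constructor
      · intro A3 h3; cases h3 with
        | eff hR' => exact .eff (hR.trans hR')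
      · intro A0 h0; cases h0 with
        | eff hR' => exact .eff (hR'.trans hR)
  | hand hC hD ihC ihD =>
      constructor
      · intro A3 h3; cases h3 with
        | hand hC' hD' => exact .hand (ihC.2 _ hC') (ihD.1 _ hD')
      · intro A0 h0; cases h0 with
        | hand hC' hD' => exact .hand (ihC.1 _ hC') (ihD.2 _ hD')
  | bang hA hΔ ihA =>
      constructor
      · intro C3 h3; cases h3 with
        | bang hA' hΔ' => exact .bang (ihA.1 _ hA') (hΔ.trans hΔ')
      · intro C0 h0; cases h0 with
        | bang hA' hΔ' => exact .bang (ihA.2 _ hA') (hΔ'.trans hΔ)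

theorem SubD.trans {C1 C2 C3 : DType σ} (h : SubD σ C1 C2) (h' : SubD σ C2 C3) :
    SubD σ C1 C3 := (SubD.trans_aux h).1 _ h'

theorem SubP.trans {A1 A2 A3 : PType σ} (h : SubP σ A1 A2) (h' : SubP σ A2 A3) :
    SubP σ A1 A3 := by
  have := SubD.trans (.bang h (Finset.Subset.refl ∅)) (.bang h' (Finset.Subset.refl ∅))
  cases this with | bang hA _ => exact hA
def RenOk (ξ : Nat → Nat) (Γ Γ' : List (PType σ)) : Prop :=
  ∀ n A, Γ[n]? = some A → Γ'[ξ n]? = some A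

theorem RenOk.lift {ξ : Nat → Nat} {Γ Γ' : List (PType σ)} (h : RenOk ξ Γ Γ')
    (A : PType σ) : RenOk (liftRen ξ) (A :: Γ) (A :: Γ') := by
  intro n B hn
  cases n with
  | zero => simpa [liftRen] using hn
  | succ n => simpa [liftRen] using h n B (by simpa using hn)

theorem RenOk.succ {Γ : List (PType σ)} (A : PType σ) : RenOk Nat.succ Γ (A :: Γ) := by
  intro n B hn; simpa using hn

variable {Ω : OpSig σ} [DecidableEq σ.Inst] [DecidableEq σ.Op]

theorem renameC_ty {Γ : List (PType σ)} {c : Comp σ} {C : DType σ}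
    (h : HasTypeC σ Ω Γ c C) :
    ∀ ξ Γ', RenOk ξ Γ Γ' → HasTypeC σ Ω Γ' (renameC ξ c) C := by
  induction h using HasTypeC.rec
    (motive_1 := fun Γ e A _ =>
      ∀ ξ Γ', RenOk ξ Γ Γ' → HasTypeE σ Ω Γ' (renameE ξ e) A)
    (motive_2 := fun Γ o C Δ _ =>
      ∀ ξ Γ', RenOk ξ Γ Γ' → HasTypeO σ Ω Γ' (renameO ξ o) C Δ)
  -- E cases
  · rename_i h ξ Γ' hξ; exact .var (hξ _ _ h)
  · rename_i ξ Γ' hξ; exact .tt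
  · rename_i ξ Γ' hξ; exact .ff
  · rename_i ξ Γ' hξ; exact .zero
  · rename_i ih ξ Γ' hξ; exact .succ (ih ξ Γ' hξ)
  · rename_i ξ Γ' hξ; exact .unit
  · rename_i ih ξ Γ' hξ; exact .fn (ih _ _ (hξ.lift _))
  · rename_i h1 h2 ξ Γ' hξ; exact .inst h1 h2
  · rename_i h3 ihv iho ξ Γ' hξ; exact .handler (ihv _ _ (hξ.lift _)) (iho _ _ hξ) h3
  · rename_i hs ih ξ Γ' hξ; exact .sub (ih _ _ hξ) hs
  -- O cases
  · rename_i ξ Γ' hξ; exact .nil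
  · rename_i hop hc0 hocs0 h5 h6 ihe ihc iho ξ Γ' hξ
    exact .cons (ihe _ _ hξ) hop (ihc _ _ ((hξ.lift _).lift _)) (iho _ _ hξ) h5 h6
  -- C cases
  · rename_i ih; intro ξ Γ' hξ; exact .ret (ih _ _ hξ)
  · rename_i hop he2 hc0 hR ih1 ih2 ihc; intro ξ Γ' hξ
    exact .call (ih1 _ _ hξ) hop (ih2 _ _ hξ) (ihc _ _ (hξ.lift _)) hR
  · rename_i ihe ihc; intro ξ Γ' hξ; exact .handle (ihe _ _ hξ) (ihc _ _ hξ)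
  · rename_i ihe ih1 ih2; intro ξ Γ' hξ
    exact .ite (ihe _ _ hξ) (ih1 _ _ hξ) (ih2 _ _ hξ)
  · rename_i ihe ih1 ih2; intro ξ Γ' hξ
    exact .case (ihe _ _ hξ) (ih1 _ _ hξ) (ih2 _ _ (hξ.lift _))
  · rename_i ih; intro ξ Γ' hξ; exact .absurd (ih _ _ hξ)
  · rename_i ih1 ih2; intro ξ Γ' hξ; exact .app (ih1 _ _ hξ) (ih2 _ _ hξ)
  · rename_i ih1 ih2; intro ξ Γ' hξ; exact .letin (ih1 _ _ hξ) (ih2 _ _ (hξ.lift _))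
  · rename_i ih1 ih2; intro ξ Γ' hξ
    exact .letrec (ih1 _ _ ((hξ.lift _).lift _)) (ih2 _ _ (hξ.lift _))
  · rename_i hs ih ξ Γ' hξ; exact .sub (ih _ _ hξ) hs
def InvE (Ω : OpSig σ) [DecidableEq σ.Inst] [DecidableEq σ.Op]
    (Γ : List (PType σ)) : Expr σ → PType σ → Prop
  | .var n, A => Γ[n]? = some A
  | .tt, A => A = .bool
  | .ff, A => A = .bool
  | .zero, A => A = .nat
  | .succ e, A => A = .nat ∧ HasTypeE σ Ω Γ e .nat
  | .unit, A => A = .unit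
  | .fn A c, T => ∃ C, T = .fn A C ∧ HasTypeC σ Ω (A :: Γ) c C
  | .inst ι, T => ∃ R, T = .eff (Ω.instOf ι) R ∧ ι ∈ R
  | .handler A cv ocs, T => ∃ B Δ Δ' Δ'',
      T = .hand (.bang A Δ) (.bang B Δ') ∧
      HasTypeC σ Ω (A :: Γ) cv (.bang B Δ') ∧
      HasTypeO σ Ω Γ ocs (.bang B Δ') Δ'' ∧ Δ ⊆ Δ'' ∪ Δ'

def InvC (Ω : OpSig σ) [DecidableEq σ.Inst] [DecidableEq σ.Op]
    (Γ : List (PType σ)) : Comp σ → DType σ → Prop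
  | .ret e, C => ∃ A Δ, C = .bang A Δ ∧ HasTypeE σ Ω Γ e A ∧
      ∃ A₀, SubP σ A₀ A ∧ InvE Ω Γ e A₀
  | .call e1 op e2 c, C => ∃ E R A Δ, C = .bang A Δ ∧
      HasTypeE σ Ω Γ e1 (.eff E R) ∧ Ω.opOf op = E ∧
      HasTypeE σ Ω Γ e2 (Ω.par op) ∧
      HasTypeC σ Ω (Ω.res op :: Γ) c (.bang A Δ) ∧ ∀ ι ∈ R, (ι, op) ∈ Δ
  | .handle e c, D => ∃ Cc, HasTypeE σ Ω Γ e (.hand Cc D) ∧ HasTypeC σ Ω Γ c Cc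
  | .ite e c1 c2, C => HasTypeE σ Ω Γ e .bool ∧ HasTypeC σ Ω Γ c1 C ∧
      HasTypeC σ Ω Γ c2 C
  | .case e c1 c2, C => HasTypeE σ Ω Γ e .nat ∧ HasTypeC σ Ω Γ c1 C ∧
      HasTypeC σ Ω (.nat :: Γ) c2 C
  | .absurd C0 e, C => C = C0 ∧ HasTypeE σ Ω Γ e .empty
  | .app e1 e2, C => ∃ A, HasTypeE σ Ω Γ e1 (.fn A C) ∧ HasTypeE σ Ω Γ e2 A
  | .letin c1 c2, C => ∃ A B Δ, C = .bang B Δ ∧ HasTypeC σ Ω Γ c1 (.bang A Δ) ∧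
      HasTypeC σ Ω (A :: Γ) c2 (.bang B Δ)
  | .letrec A C0 c1 c2, D => HasTypeC σ Ω (A :: .fn A C0 :: Γ) c1 C0 ∧
      HasTypeC σ Ω (.fn A C0 :: Γ) c2 D

variable {Ω : OpSig σ} [DecidableEq σ.Inst] [DecidableEq σ.Op]

theorem peelC {Γ : List (PType σ)} {c : Comp σ} {C : DType σ}
    (h : HasTypeC σ Ω Γ c C) : ∃ C₀, SubD σ C₀ C ∧ InvC Ω Γ c C₀ := by
  induction h using HasTypeC.rec
    (motive_1 := fun Γ e A _ => ∃ A₀, SubP σ A₀ A ∧ InvE Ω Γ e A₀)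
    (motive_2 := fun _ _ _ _ _ => True)
  -- E cases
  · rename_i A h; exact ⟨A, SubP.rfl A, h⟩
  · exact ⟨.bool, SubP.rfl _, rfl⟩
  · exact ⟨.bool, SubP.rfl _, rfl⟩
  · exact ⟨.nat, SubP.rfl _, rfl⟩
  · rename_i h ih; exact ⟨.nat, SubP.rfl _, rfl, h⟩
  · exact ⟨.unit, SubP.rfl _, rfl⟩
  · rename_i A c C h ih; exact ⟨.fn A C, SubP.rfl _, C, rfl, h⟩
  · rename_i ι E R h1 h2
    refine ⟨.eff E R, SubP.rfl _, R, ?_, h1⟩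
    rw [h2 ι h1]
  · rename_i hcv hocs h3 ihv iho
    exact ⟨_, SubP.rfl _, _, _, _, _, rfl, hcv, hocs, h3⟩
  · rename_i hs ih
    obtain ⟨A₀, h0, hi⟩ := ih
    exact ⟨A₀, h0.trans hs, hi⟩
  -- O cases
  · exact trivial
  · exact trivial
  -- C cases
  · rename_i he ih; exact ⟨_, SubD.rfl _, _, _, rfl, he, ih⟩
  · rename_i he1 hop he2 hc hR ih1 ih2 ihc
    exact ⟨_, SubD.rfl _, _, _, _, _, rfl, he1, hop, he2, hc, hR⟩
  · rename_i he hc ihe ihc; exact ⟨_, SubD.rfl _, _, he, hc⟩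
  · rename_i he h1 h2 ihe ih1 ih2; exact ⟨_, SubD.rfl _, he, h1, h2⟩
  · rename_i he h1 h2 ihe ih1 ih2; exact ⟨_, SubD.rfl _, he, h1, h2⟩
  · rename_i he ih; exact ⟨_, SubD.rfl _, rfl, he⟩
  · rename_i h1 h2 ih1 ih2; exact ⟨_, SubD.rfl _, _, h1, h2⟩
  · rename_i h1 h2 ih1 ih2; exact ⟨_, SubD.rfl _, _, _, _, rfl, h1, h2⟩
  · rename_i h1 h2 ih1 ih2; exact ⟨_, SubD.rfl _, h1, h2⟩
  · rename_i hs ih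
    obtain ⟨C₀, h0, hi⟩ := ih
    exact ⟨C₀, h0.trans hs, hi⟩

theorem peelE {Γ : List (PType σ)} {e : Expr σ} {A : PType σ}
    (h : HasTypeE σ Ω Γ e A) : ∃ A₀, SubP σ A₀ A ∧ InvE Ω Γ e A₀ := by
  obtain ⟨C₀, hs, hi⟩ := peelC (HasTypeC.ret (Δ := ∅) h)
  obtain ⟨A₁, Δ₁, rfl, -, A₀, h0, hinv⟩ := hi
  cases hs with
  | bang hP _ => exact ⟨A₀, h0.trans hP, hinv⟩
theorem renameE_ty {Γ Γ' : List (PType σ)} {e : Expr σ} {A : PType σ}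
    {ξ : Nat → Nat} (h : HasTypeE σ Ω Γ e A) (hξ : RenOk ξ Γ Γ') :
    HasTypeE σ Ω Γ' (renameE ξ e) A := by
  have h1 := renameC_ty (HasTypeC.ret (Δ := ∅) h) ξ Γ' hξ
  rw [renameC] at h1
  obtain ⟨C₀, hs, hi⟩ := peelC h1
  obtain ⟨A₁, Δ₁, rfl, he, -⟩ := hi
  cases hs with
  | bang hP _ => exact he.sub hP

def SubOk (Ω : OpSig σ) [DecidableEq σ.Inst] [DecidableEq σ.Op]
    (s : Nat → Expr σ) (Γ Γ' : List (PType σ)) : Prop :=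
  ∀ n A, Γ[n]? = some A → HasTypeE σ Ω Γ' (s n) A

theorem SubOk.lift {s : Nat → Expr σ} {Γ Γ' : List (PType σ)}
    (h : SubOk Ω s Γ Γ') (A : PType σ) : SubOk Ω (liftSub s) (A :: Γ) (A :: Γ') := by
  intro n B hn
  cases n with
  | zero =>
      simp at hn
      subst hn
      exact .var rfl
  | succ n =>
      exact renameE_ty (h n B (by simpa using hn)) (RenOk.succ A)

theorem substC_ty {Γ : List (PType σ)} {c : Comp σ} {C : DType σ}
    (h : HasTypeC σ Ω Γ c C) :
    ∀ s Γ', SubOk Ω s Γ Γ' → HasTypeC σ Ω Γ' (substC s c) C := by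
  induction h using HasTypeC.rec
    (motive_1 := fun Γ e A _ =>
      ∀ s Γ', SubOk Ω s Γ Γ' → HasTypeE σ Ω Γ' (substE s e) A)
    (motive_2 := fun Γ o C Δ _ =>
      ∀ s Γ', SubOk Ω s Γ Γ' → HasTypeO σ Ω Γ' (substO s o) C Δ)
  -- E cases
  · rename_i h s Γ' hs; exact hs _ _ h
  · rename_i s Γ' hs; exact .tt
  · rename_i s Γ' hs; exact .ff
  · rename_i s Γ' hs; exact .zero
  · rename_i ih s Γ' hs; exact .succ (ih s Γ' hs)
  · rename_i s Γ' hs; exact .unit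
  · rename_i ih s Γ' hs; exact .fn (ih _ _ (hs.lift _))
  · rename_i h1 h2 s Γ' hs; exact .inst h1 h2
  · rename_i h3 ihv iho s Γ' hs; exact .handler (ihv _ _ (hs.lift _)) (iho _ _ hs) h3
  · rename_i hsub ih s Γ' hs; exact .sub (ih _ _ hs) hsub
  -- O cases
  · rename_i s Γ' hs; exact .nil
  · rename_i hop hc0 hocs0 h5 h6 ihe ihc iho s Γ' hs
    exact .cons (ihe _ _ hs) hop (ihc _ _ ((hs.lift _).lift _)) (iho _ _ hs) h5 h6
  -- C cases
  · rename_i ih; intro s Γ' hs; exact .ret (ih _ _ hs)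
  · rename_i hop he2 hc0 hR ih1 ih2 ihc; intro s Γ' hs
    exact .call (ih1 _ _ hs) hop (ih2 _ _ hs) (ihc _ _ (hs.lift _)) hR
  · rename_i ihe ihc; intro s Γ' hs; exact .handle (ihe _ _ hs) (ihc _ _ hs)
  · rename_i ihe ih1 ih2; intro s Γ' hs
    exact .ite (ihe _ _ hs) (ih1 _ _ hs) (ih2 _ _ hs)
  · rename_i ihe ih1 ih2; intro s Γ' hs
    exact .case (ihe _ _ hs) (ih1 _ _ hs) (ih2 _ _ (hs.lift _))
  · rename_i ih; intro s Γ' hs; exact .absurd (ih _ _ hs)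
  · rename_i ih1 ih2; intro s Γ' hs; exact .app (ih1 _ _ hs) (ih2 _ _ hs)
  · rename_i ih1 ih2; intro s Γ' hs; exact .letin (ih1 _ _ hs) (ih2 _ _ (hs.lift _))
  · rename_i ih1 ih2; intro s Γ' hs
    exact .letrec (ih1 _ _ ((hs.lift _).lift _)) (ih2 _ _ (hs.lift _))
  · rename_i hsub ih s Γ' hs; exact .sub (ih _ _ hs) hsub

theorem subst0C_ty {Γ : List (PType σ)} {c : Comp σ} {C : DType σ} {A : PType σ}
    {e : Expr σ} (h : HasTypeC σ Ω (A :: Γ) c C) (he : HasTypeE σ Ω Γ e A) :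
    HasTypeC σ Ω Γ (subst0C e c) C := by
  apply substC_ty h
  intro n B hn
  cases n with
  | zero => simp at hn; subst hn; exact he
  | succ n => exact .var (by simpa using hn)

theorem subst2C_ty {Γ : List (PType σ)} {c : Comp σ} {C : DType σ} {A B : PType σ}
    {e1 e0 : Expr σ} (h : HasTypeC σ Ω (B :: A :: Γ) c C)
    (h1 : HasTypeE σ Ω Γ e1 A) (h0 : HasTypeE σ Ω Γ e0 B) :
    HasTypeC σ Ω Γ (subst2C e1 e0 c) C := by
  apply substC_ty h
  intro n X hn
  match n with
  | 0 => simp at hn; subst hn; exact h0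
  | 1 => simp at hn; subst hn; exact h1
  | (n+2) => exact .var (by simpa using hn)
theorem eff_inst {e : Expr σ} {E : σ.Effect} {R : Finset σ.Inst}
    (h : HasTypeE σ Ω [] e (.eff E R)) :
    ∃ ι, e = .inst ι ∧ ι ∈ R ∧ Ω.instOf ι = E := by
  obtain ⟨A₀, hs, hi⟩ := peelE h
  cases e with
  | var n => simp [InvE] at hi
  | tt => simp only [InvE] at hi; subst hi; cases hs
  | ff => simp only [InvE] at hi; subst hi; cases hs
  | zero => simp only [InvE] at hi; subst hi; cases hs
  | succ e => obtain ⟨h1, -⟩ := hi; subst h1; cases hs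
  | unit => simp only [InvE] at hi; subst hi; cases hs
  | fn A c => obtain ⟨C, h1, -⟩ := hi; subst h1; cases hs
  | handler A cv ocs => obtain ⟨B, Δ, Δ', Δ'', h1, -⟩ := hi; subst h1; cases hs
  | inst ι =>
      obtain ⟨R₀, h1, h2⟩ := hi
      subst h1
      cases hs with
      | eff hsub => exact ⟨ι, rfl, hsub h2, rfl⟩

theorem dispatch_ty {ocs : OpCases σ} {ι : σ.Inst} {op : σ.Op} {e κ : Expr σ}
    {c' : Comp σ} {B : PType σ} {Δ' Δ'' : Finset (σ.Inst × σ.Op)}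
    (hd : Dispatch ocs ι op e κ c')
    (hocs : HasTypeO σ Ω [] ocs (.bang B Δ') Δ'')
    (hmem : (ι, op) ∈ Δ'' ∪ Δ')
    (hιE : Ω.instOf ι = Ω.opOf op)
    (hκ : HasTypeE σ Ω [] κ (.fn (Ω.res op) (.bang B Δ')))
    (he : HasTypeE σ Ω [] e (Ω.par op)) :
    HasTypeC σ Ω [] c' (.bang B Δ') := by
  revert hιE hκ he
  revert Δ'' hocs hmem
  induction hd with
  | @nil C ι op e κ =>
      intro Δ'' hocs hmem hιE hκ he
      cases hocs
      rw [Finset.empty_union] at hmem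
      refine .call (E := Ω.opOf op) (R := {ι}) ?_ rfl he ?_ ?_
      · exact .inst (Finset.mem_singleton_self ι)
          (fun k hk => by rw [Finset.mem_singleton] at hk; rw [hk, hιE])
      · exact .app (renameE_ty hκ (RenOk.succ _)) (.var rfl)
      · intro ι' hι'; rw [Finset.mem_singleton] at hι'; rwa [hι']
  | @found ι op cb ocs0 e κ =>
      intro Δ'' hocs hmem hιE hκ he
      cases hocs with
      | cons hinst hopE hc htail hsing hnsing => exact subst2C_ty hc he hκ
  | @skip e0 op0 cb ocs0 ι op e κ c0 hne hd' ih =>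
      intro Δ'' hocs hmem hιE hκ he
      cases hocs with
      | cons hinst hopE hc htail hsing hnsing =>
        rename_i E0 R0 Δt
        refine ih htail ?_ hιE hκ he
        rw [Finset.mem_union] at hmem ⊢
        rcases hmem with hmem | hmem
        swap
        · exact Or.inr hmem
        by_cases hsg : ∃ ι₀, R0 = ({ι₀} : Finset σ.Inst)
        · obtain ⟨ι₀, rfl⟩ := hsg
          have := hsing ι₀ rfl hmem
          rw [Finset.mem_insert] at this
          rcases this with heq | hin
          · -- (ι, op) = (ι₀, op'): contradiction with skip condition
            obtain ⟨ι₁, rfl, hι₁, -⟩ := eff_inst hinst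
            rw [Finset.mem_singleton] at hι₁
            subst hι₁
            obtain ⟨h1, h2⟩ := Prod.mk.injEq .. ▸ heq
            rcases hne with hne | hne
            · exact absurd (by rw [h1]) hne
            · exact absurd h2 hne
          · exact Or.inl hin
        · exact Or.inl (hnsing hsg hmem)
theorem preservation' {c c' : Comp σ} {C : DType σ}
    (h : HasTypeC σ Ω [] c C) (hs : Step Ω c c') : HasTypeC σ Ω [] c' C := by
  revert C
  induction hs with
  | iteTrue =>
      intro C h
      obtain ⟨C₀, hsub, he, h1, h2⟩ := peelC h
      exact h1.sub hsub
  | iteFalse =>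
      intro C h
      obtain ⟨C₀, hsub, he, h1, h2⟩ := peelC h
      exact h2.sub hsub
  | caseZero =>
      intro C h
      obtain ⟨C₀, hsub, he, h1, h2⟩ := peelC h
      exact h1.sub hsub
  | caseSucc =>
      intro C h
      obtain ⟨C₀, hsub, hn, h1, h2⟩ := peelC h
      obtain ⟨A₀, hs', heq, he'⟩ := peelE hn
      exact (subst0C_ty h2 he').sub hsub
  | app =>
      intro C h
      obtain ⟨C₀, hsub, Aarg, h1, h2⟩ := peelC h
      obtain ⟨A₀, hsP, C1, hA0, hbody⟩ := peelE h1
      subst hA0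
      cases hsP with
      | fn hdom hcod =>
          exact (subst0C_ty hbody (h2.sub hdom)).sub (hcod.trans hsub)
  | letCong hstep ih =>
      intro C h
      obtain ⟨C₀, hsub, A, B, Δ, rfl, h1, h2⟩ := peelC h
      exact (HasTypeC.letin (ih h1) h2).sub hsub
  | letVal =>
      intro C h
      obtain ⟨C₀, hsub, A, B, Δ, rfl, h1, h2⟩ := peelC h
      obtain ⟨C₁, hsub1, A₁, Δ₁, rfl, he, -⟩ := peelC h1
      cases hsub1 with
      | bang hP _ => exact (subst0C_ty h2 (he.sub hP)).sub hsub
  | @letOp ι op e c1 c2 =>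
      intro C h
      obtain ⟨C₀, hsub, A, B, Δ, rfl, h1, h2⟩ := peelC h
      obtain ⟨C₁, hsub1, E, R, A₁, Δ₁, rfl, hι, hopE, he, hc1, hR⟩ := peelC h1
      cases hsub1 with
      | bang hP hΔ =>
          refine HasTypeC.sub ?_ hsub
          refine HasTypeC.call hι hopE he ?_ (fun ι' hι' => hΔ (hR ι' hι'))
          refine HasTypeC.letin (hc1.sub (SubD.bang hP hΔ)) ?_
          exact renameC_ty h2 _ _ ((RenOk.succ (Ω.res op)).lift A)
  | @letrec A C0 c1 c2 =>
      intro C h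
      obtain ⟨C₀, hsub, h1, h2⟩ := peelC h
      have hsw : RenOk swap01 (A :: .fn A C0 :: []) (.fn A C0 :: A :: []) := by
        intro n B hn
        cases n with
        | zero => simpa [swap01] using hn
        | succ m =>
            cases m with
            | zero => simpa [swap01] using hn
            | succ k => simp at hn
      have hrec : HasTypeE σ Ω [] (recUnfold A C0 c1) (.fn A C0) := by
        rw [recUnfold]
        refine HasTypeE.fn (HasTypeC.letrec ?_ ?_)
        · exact renameC_ty h1 _ _ (((RenOk.succ A).lift (.fn A C0)).lift A)
        · exact renameC_ty h1 _ _ hsw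
      exact (subst0C_ty h2 hrec).sub hsub
  | handleCong hstep ih =>
      intro C h
      obtain ⟨D₀, hsub, Cc, he, hc⟩ := peelC h
      exact (HasTypeC.handle he (ih hc)).sub hsub
  | handleVal =>
      intro C h
      obtain ⟨D₀, hsub, Cc, hh, hr⟩ := peelC h
      obtain ⟨A₀, hsP, B, Δ, Δ', Δ'', hA0, hcv, hocs, hΔ⟩ := peelE hh
      subst hA0
      cases hsP with
      | hand hCc hD =>
          obtain ⟨C₁, hsub1, A₁, Δ₁, rfl, he1, -⟩ := peelC hr
          cases hsub1.trans hCc with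
          | bang hP _ => exact (subst0C_ty hcv (he1.sub hP)).sub (hD.trans hsub)
  | @handleOp A cv ocs ι op e cc c' hd =>
      intro C h
      obtain ⟨D₀, hsub, Cc, hh, hcall⟩ := peelC h
      obtain ⟨A₀, hsP, B, Δ, Δ', Δ'', hA0, hcv, hocs2, hΔ⟩ := peelE hh
      subst hA0
      cases hsP with
      | hand hCc hD =>
          obtain ⟨C₁, hsub1, E, R, A₁, Δ₁, rfl, hι, hopE, he, hcc, hR⟩ := peelC hcall
          have hbang : SubD σ (.bang A₁ Δ₁) (.bang A Δ) := hsub1.trans hCc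
          obtain ⟨ι₁, heq, hmemR, hEeq⟩ := eff_inst hι
          injection heq with heq'
          subst heq'
          have hιE : Ω.instOf ι = Ω.opOf op := by rw [hEeq, hopE]
          have hmem : (ι, op) ∈ Δ'' ∪ Δ' := by
            apply hΔ
            cases hbang with
            | bang _ hΔ' => exact hΔ' (hR ι hmemR)
          have hhandler : HasTypeE σ Ω []
              (.handler A cv ocs) (.hand (.bang A Δ) (.bang B Δ')) :=
            .handler hcv hocs2 hΔ
          have hκ : HasTypeE σ Ω []
              (.fn (Ω.res op) (.handle (shiftE (.handler A cv ocs)) cc))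
              (.fn (Ω.res op) (.bang B Δ')) := by
            refine .fn (HasTypeC.handle ?_ (hcc.sub hbang))
            exact renameE_ty hhandler (RenOk.succ _)
          exact (dispatch_ty hd hocs2 hmem hιE hκ he).sub (hD.trans hsub)

/-- **Preservation.** If `⊢ c : C` is derivable for a closed
computation `c` and `c ⇝ c'`, then `⊢ c' : C` is derivable. -/
theorem preservation {σ : Sig} (Ω : OpSig σ) [DecidableEq σ.Inst] [DecidableEq σ.Op]
    (c c' : Comp σ) (C : DType σ)
    (h : HasTypeC σ Ω [] c C) (hs : Step Ω c c') :
    HasTypeC σ Ω [] c' C := by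
  exact preservation' h hs

end CoreEff
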